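/- Let K be a complete non-archimedean field with ring of integers R, and let f_1,...,f_n ∈ R[X_1,...,X_n] and a = (a_1,...,a_n) ∈ R^n satisfy |f_l(a)| < |det Jf(a)|^2 for all l, where Jf is the Jacobian matrix of the f_l. Then there exist unique b_1,...,b_n ∈ R with f_l(b) = 0 and |b_l - a_l| < |det Jf(a)| for all l. -/

import Mathlib

open MvPolynomial

set_option maxHeartbeats 1000000

namespace HenselMV
open Finset
variable {K : Type} [NormedField K] {n : ℕ}

theorem nsum (hna : ∀ x y : K, ‖x + y‖ ≤ max ‖x‖ ‖y‖) {ι : Type*} (s : Finset ι) (g : ι → K)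
    {C : ℝ} (hC : 0 ≤ C) (hg : ∀ i ∈ s, ‖g i‖ ≤ C) : ‖∑ i ∈ s, g i‖ ≤ C := by
  classical
  induction s using Finset.induction with
  | empty => simpa using hC
  | @insert x s hx ih =>
      rw [Finset.sum_insert hx]
      exact le_trans (hna _ _) (max_le (hg _ (Finset.mem_insert_self _ _))
        (ih fun i hi => hg i (Finset.mem_insert_of_mem hi)))

theorem nnat (hna : ∀ x y : K, ‖x + y‖ ≤ max ‖x‖ ‖y‖) (m : ℕ) : ‖(m : K)‖ ≤ 1 := by
  induction m with
  | zero => simp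
  | succ k ih =>
      push_cast
      exact le_trans (hna _ _) (max_le ih (by simp))

theorem na_norm_eq (hna : ∀ x y : K, ‖x + y‖ ≤ max ‖x‖ ‖y‖) {u v : K}
    (h : ‖u - v‖ < ‖v‖) : ‖u‖ = ‖v‖ := by
  have h1 : ‖u‖ ≤ ‖v‖ := by
    have := hna (u - v) v
    simpa using this.trans (max_le h.le le_rfl)
  have h2 : ‖v‖ ≤ ‖u‖ := by
    have := hna (v - u) u
    simp only [sub_add_cancel] at this
    rcases max_cases ‖v - u‖ ‖u‖ with ⟨he, _⟩ | ⟨he, _⟩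
    · rw [he] at this
      rw [← norm_neg (v - u), neg_sub] at this
      exact absurd (lt_of_le_of_lt this h) (lt_irrefl _)
    · rwa [he] at this
  exact le_antisymm h1 h2

/-- All coefficients have norm at most 1. -/
def Int1 (p : MvPolynomial (Fin n) K) : Prop := ∀ d, ‖coeff d p‖ ≤ 1

theorem Int1.C {a : K} (ha : ‖a‖ ≤ 1) : Int1 (MvPolynomial.C a : MvPolynomial (Fin n) K) := by
  intro d; rw [coeff_C]; split <;> simp [ha]

theorem Int1.one : Int1 (1 : MvPolynomial (Fin n) K) := Int1.C (by simp)

theorem Int1.zero : Int1 (0 : MvPolynomial (Fin n) K) := by intro d; simp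

theorem Int1.X (i : Fin n) : Int1 (MvPolynomial.X i : MvPolynomial (Fin n) K) := by
  intro d; rw [coeff_X']; split <;> simp

theorem Int1.neg {p : MvPolynomial (Fin n) K} (hp : Int1 p) : Int1 (-p) := by
  intro d; simpa using hp d

theorem Int1.monomial {d : Fin n →₀ ℕ} {c : K} (hc : ‖c‖ ≤ 1) :
    Int1 (MvPolynomial.monomial d c) := by
  intro e
  rw [coeff_monomial]
  split <;> simp [hc]

section
variable (hna : ∀ x y : K, ‖x + y‖ ≤ max ‖x‖ ‖y‖)
include hna

theorem Int1.add {p q : MvPolynomial (Fin n) K} (hp : Int1 p) (hq : Int1 q) : Int1 (p + q) := by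
  intro d
  rw [coeff_add]
  exact le_trans (hna _ _) (max_le (hp d) (hq d))

theorem Int1.sub {p q : MvPolynomial (Fin n) K} (hp : Int1 p) (hq : Int1 q) : Int1 (p - q) := by
  rw [sub_eq_add_neg]; exact hp.add hna hq.neg

theorem Int1.mul {p q : MvPolynomial (Fin n) K} (hp : Int1 p) (hq : Int1 q) : Int1 (p * q) := by
  intro d
  rw [coeff_mul]
  refine nsum hna _ _ zero_le_one fun x _ => ?_
  rw [norm_mul]
  exact mul_le_one₀ (hp _) (norm_nonneg _) (hq _)

theorem Int1.sum {ι : Type*} (s : Finset ι) (g : ι → MvPolynomial (Fin n) K)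
    (hg : ∀ i ∈ s, Int1 (g i)) : Int1 (∑ i ∈ s, g i) := by
  intro d
  rw [coeff_sum]
  exact nsum hna _ _ zero_le_one fun i hi => hg i hi d

theorem Int1.prod {ι : Type*} (s : Finset ι) (g : ι → MvPolynomial (Fin n) K)
    (hg : ∀ i ∈ s, Int1 (g i)) : Int1 (∏ i ∈ s, g i) := by
  classical
  induction s using Finset.induction with
  | empty => simpa using Int1.one
  | @insert x s hx ih =>
      rw [Finset.prod_insert hx]
      exact (hg _ (Finset.mem_insert_self _ _)).mul hna
        (ih fun i hi => hg i (Finset.mem_insert_of_mem hi))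

theorem Int1.pow {p : MvPolynomial (Fin n) K} (hp : Int1 p) (k : ℕ) : Int1 (p ^ k) := by
  induction k with
  | zero => simpa using Int1.one
  | succ m ih => rw [pow_succ]; exact ih.mul hna hp

theorem Int1.pderiv {p : MvPolynomial (Fin n) K} (hp : Int1 p) (i : Fin n) :
    Int1 (MvPolynomial.pderiv i p) := by
  rw [p.as_sum, map_sum]
  refine Int1.sum hna _ _ fun d _ => ?_
  rw [pderiv_monomial]
  refine Int1.monomial ?_
  rw [norm_mul]
  exact mul_le_one₀ (hp d) (norm_nonneg _) (nnat hna _)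

theorem Int1.det (P : Matrix (Fin n) (Fin n) (MvPolynomial (Fin n) K))
    (hP : ∀ i j, Int1 (P i j)) : Int1 P.det := by
  rw [Matrix.det_apply]
  refine Int1.sum hna _ _ fun σ _ => ?_
  rcases Int.units_eq_one_or (Equiv.Perm.sign σ) with hs | hs <;>
    rw [hs] <;> simp only [one_smul, Units.neg_smul, one_smul]
  · exact Int1.prod hna _ _ fun i _ => hP _ _
  · exact (Int1.prod hna _ _ fun i _ => hP _ _).neg


end

/-- degree-graded evaluation bound -/
theorem norm_eval_le (hna : ∀ x y : K, ‖x + y‖ ≤ max ‖x‖ ‖y‖) {p : MvPolynomial (Fin n) K}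
    (hp : ∀ d, ‖coeff d p‖ ≤ 1) {m : ℕ}
    (hdeg : ∀ d ∈ p.support, m ≤ d.sum fun _ k => k)
    {x : Fin n → K} {r : ℝ} (hr0 : 0 ≤ r) (hr1 : r ≤ 1) (hx : ∀ i, ‖x i‖ ≤ r) :
    ‖eval x p‖ ≤ r ^ m := by
  rw [eval_eq]
  refine nsum hna _ _ (pow_nonneg hr0 m) fun d hd => ?_
  rw [norm_mul, norm_prod]
  calc ‖coeff d p‖ * ∏ i ∈ d.support, ‖x i ^ d i‖
      ≤ 1 * ∏ i ∈ d.support, r ^ d i := by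
        refine mul_le_mul (hp d) (Finset.prod_le_prod (fun i _ => by positivity)
          fun i _ => ?_) (by positivity) zero_le_one
        rw [norm_pow]
        exact pow_le_pow_left₀ (norm_nonneg _) (hx i) _
    _ = r ^ (d.sum fun _ k => k) := by rw [one_mul, Finset.prod_pow_eq_pow_sum]; rfl
    _ ≤ r ^ m := pow_le_pow_of_le_one hr0 hr1 (hdeg d hd)

theorem norm_eval_le_one (hna : ∀ x y : K, ‖x + y‖ ≤ max ‖x‖ ‖y‖) {p : MvPolynomial (Fin n) K}
    (hp : ∀ d, ‖coeff d p‖ ≤ 1) {x : Fin n → K} (hx : ∀ i, ‖x i‖ ≤ 1) : ‖eval x p‖ ≤ 1 := by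
  have := norm_eval_le (m := 0) (r := 1) hna hp (fun d _ => Nat.zero_le _) zero_le_one le_rfl hx
  simpa using this


theorem deg_zero {d : Fin n →₀ ℕ} (h : (d.sum fun _ k => k) = 0) : d = 0 := by
  ext i
  by_contra hi
  have hmem : i ∈ d.support := Finsupp.mem_support_iff.mpr (by simpa using hi)
  have := (Finset.sum_eq_zero_iff.mp h) i hmem
  exact hi (by simpa using this)

theorem deg_one {d : Fin n →₀ ℕ} (h : (d.sum fun _ k => k) = 1) :
    ∃ j, d = Finsupp.single j 1 := by
  classical
  have hne : d.support.Nonempty := by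
    rcases Finset.eq_empty_or_nonempty d.support with he | hne
    · exfalso
      rw [Finsupp.sum, he] at h
      simp at h
    · exact hne
  obtain ⟨j, hj⟩ := hne
  have hdj : 1 ≤ d j := Nat.one_le_iff_ne_zero.mpr (Finsupp.mem_support_iff.mp hj)
  have hsplit : ∑ i ∈ d.support \ {j}, d i + d j = 1 := by
    rw [← Finset.sum_eq_sum_sdiff_singleton_add hj]
    exact h
  have hrest : ∑ i ∈ d.support \ {j}, d i = 0 := by omega
  have hdj1 : d j = 1 := by omega
  refine ⟨j, ?_⟩
  ext i
  rcases eq_or_ne i j with rfl | hij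
  · simp [hdj1]
  · rw [Finsupp.single_eq_of_ne' (Ne.symm hij)]
    by_contra hi
    have hmem : i ∈ d.support \ {j} := by
      rw [Finset.mem_sdiff, Finset.mem_singleton]
      exact ⟨Finsupp.mem_support_iff.mpr (by simpa using hi), hij⟩
    exact hi (by simpa using (Finset.sum_eq_zero_iff.mp hrest) i hmem)

theorem taylor_coeffs (x : Fin n → K) (p : MvPolynomial (Fin n) K) :
    coeff 0 (bind₁ (fun i => X i + C (x i)) p) = eval x p ∧
    ∀ j, coeff (Finsupp.single j 1) (bind₁ (fun i => X i + C (x i)) p)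
      = eval x (pderiv j p) := by
  classical
  induction p using MvPolynomial.induction_on with
  | C c   => constructor
             · simp
             · intro j
               have hne : ¬((0 : Fin n →₀ ℕ) = Finsupp.single j 1) := fun he =>
                 one_ne_zero (α := ℕ) (by simpa [Finsupp.single_eq_zero] using he.symm)
               simp [coeff_C, hne, pderiv_C]
  | add p q hp hq =>
      constructor
      · simp [map_add, coeff_add, hp.1, hq.1]
      · intro j
        simp [map_add, coeff_add, hp.2 j, hq.2 j]
  | mul_X p i hp =>
      have key : bind₁ (fun i => X i + C (x i)) (p * X i)
          = bind₁ (fun i => X i + C (x i)) p * (X i + C (x i)) := by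
        rw [map_mul, bind₁_X_right]
      constructor
      · rw [key, mul_add, coeff_add, mul_comm _ (C (x i)), coeff_C_mul,
          coeff_mul_X' 0 i]
        simp [hp.1, mul_comm]
      · intro j
        rw [key, mul_add, coeff_add, mul_comm _ (C (x i)), coeff_C_mul,
          coeff_mul_X' (Finsupp.single j 1) i]
        have hsupp : (Finsupp.single j 1 : Fin n →₀ ℕ).support = {j} :=
          Finsupp.support_single_ne_zero _ one_ne_zero
        rw [hsupp]
        have hpd : pderiv j (p * X i) = pderiv j p * X i + p * pderiv j (X i) :=
          pderiv_mul
        rcases eq_or_ne i j with rfl | hij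
        · rw [if_pos (Finset.mem_singleton_self i), tsub_self, hp.1, hpd]
          simp [hp.2 i]
          ring
        · rw [if_neg (by simpa using hij), hpd]
          simp [hp.2 j, pderiv_X_of_ne (Ne.symm hij), hij]
          ring

section withNA
variable (hna : ∀ x y : K, ‖x + y‖ ≤ max ‖x‖ ‖y‖)
include hna

theorem Int1.bind₁ {p : MvPolynomial (Fin n) K} (hp : Int1 p) {g : Fin n → MvPolynomial (Fin n) K}
    (hg : ∀ i, Int1 (g i)) : Int1 (MvPolynomial.bind₁ g p) := by
  rw [p.as_sum, map_sum]
  refine Int1.sum hna _ _ fun d _ => ?_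
  rw [bind₁_monomial]
  exact (Int1.C (hp d)).mul hna (Int1.prod hna _ _ fun i _ => (hg i).pow hna _)

/-- The quadratic Taylor estimate. -/
theorem taylor_estimate {p : MvPolynomial (Fin n) K} (hp : Int1 p)
    {x h : Fin n → K} (hx : ∀ i, ‖x i‖ ≤ 1)
    {r : ℝ} (hr0 : 0 ≤ r) (hr1 : r ≤ 1) (hh : ∀ i, ‖h i‖ ≤ r) :
    ‖eval (fun i => x i + h i) p - eval x p - ∑ j, eval x (pderiv j p) * h j‖ ≤ r ^ 2 := by
  classical
  set g : Fin n → MvPolynomial (Fin n) K := fun i => X i + C (x i) with hg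
  set q : MvPolynomial (Fin n) K := MvPolynomial.bind₁ g p with hq
  have hgI : ∀ i, Int1 (g i) := fun i => (Int1.X i).add hna (Int1.C (hx i))
  have hqI : Int1 q := hp.bind₁ hna hgI
  have heval : eval h q = eval (fun i => x i + h i) p := by
    rw [hq]
    show (eval₂Hom (RingHom.id K) h) (MvPolynomial.bind₁ g p) = _
    rw [eval₂Hom_bind₁]
    have hfun : (fun i => eval₂Hom (RingHom.id K) h (g i)) = fun i => x i + h i := by
      funext i; simp [hg, add_comm]
    rw [hfun]
    rfl
  set T : MvPolynomial (Fin n) K :=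
    q - C (eval x p) - ∑ j, C (eval x (pderiv j p)) * X j with hT
  have hTI : Int1 T := by
    refine (hqI.sub hna (Int1.C (norm_eval_le_one hna hp hx))).sub hna
      (Int1.sum hna _ _ fun j _ => (Int1.C (norm_eval_le_one hna (hp.pderiv hna j) hx)).mul hna (Int1.X j))
  have hTdeg : ∀ d ∈ T.support, 2 ≤ d.sum fun _ k => k := by
    intro d hd
    by_contra hlt
    push_neg at hlt
    have hcoeff : coeff d T ≠ 0 := MvPolynomial.mem_support_iff.mp hd
    interval_cases hdeg : (d.sum fun _ k => k)
    · apply hcoeff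
      have hd0 : d = 0 := deg_zero hdeg
      subst hd0
      rw [hT]
      rw [coeff_sub, coeff_sub, (taylor_coeffs x p).1, coeff_C]
      simp only [if_pos rfl]
      rw [coeff_sum]
      have : ∀ j ∈ Finset.univ (α := Fin n), coeff 0 (C (eval x (pderiv j p)) * X j) = 0 := by
        intro j _
        rw [coeff_C_mul, coeff_X']
        rw [if_neg]
        · ring
        · exact fun he => one_ne_zero (α := ℕ) (by simpa [Finsupp.single_eq_zero] using he)
      rw [Finset.sum_congr rfl this]
      simp
    · apply hcoeff
      obtain ⟨j, rfl⟩ := deg_one hdeg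
      rw [hT, coeff_sub, coeff_sub, (taylor_coeffs x p).2 j, coeff_C]
      have hne : ¬((Finsupp.single j 1 : Fin n →₀ ℕ) = 0) :=
        fun he => one_ne_zero (α := ℕ) (by simpa [Finsupp.single_eq_zero] using he)
      rw [if_neg (fun he => hne he.symm)]
      rw [coeff_sum]
      have : ∀ j' ∈ Finset.univ (α := Fin n), coeff (Finsupp.single j 1) (C (eval x (pderiv j' p)) * X j')
          = if j' = j then eval x (pderiv j p) else 0 := by
        intro j' _
        rw [coeff_C_mul, coeff_X']
        rcases eq_or_ne j' j with rfl | hjj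
        · simp
        · rw [if_neg (by simpa [Finsupp.single_left_inj (one_ne_zero (α := ℕ))] using hjj), if_neg hjj]
          ring
      rw [Finset.sum_congr rfl this, Finset.sum_ite_eq' Finset.univ j]
      simp
  have hevalT : eval h T = eval (fun i => x i + h i) p - eval x p - ∑ j, eval x (pderiv j p) * h j := by
    rw [hT]
    rw [map_sub, map_sub, heval, map_sum]
    congr 1
    congr 1
    · simp
    · exact Finset.sum_congr rfl fun j _ => by simp
  rw [← hevalT]
  exact norm_eval_le hna hTI hTdeg hr0 hr1 hh

/-- Mean value estimate. -/
theorem eval_sub_eval {p : MvPolynomial (Fin n) K} (hp : Int1 p) {x y : Fin n → K}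
    (hx : ∀ i, ‖x i‖ ≤ 1) {r : ℝ} (hr0 : 0 ≤ r) (hr1 : r ≤ 1)
    (hxy : ∀ i, ‖y i - x i‖ ≤ r) : ‖eval y p - eval x p‖ ≤ r := by
  have ht := taylor_estimate hna hp (h := fun i => y i - x i) hx hr0 hr1 hxy
  have hyy : (fun i => x i + (y i - x i)) = y := funext fun i => by ring
  rw [hyy] at ht
  have hL : ‖∑ j, eval x (pderiv j p) * (y j - x j)‖ ≤ r := by
    refine nsum hna _ _ hr0 fun j _ => ?_
    rw [norm_mul]
    calc ‖eval x (pderiv j p)‖ * ‖y j - x j‖ ≤ 1 * r :=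
          mul_le_mul (norm_eval_le_one hna (hp.pderiv hna j) hx) (hxy j) (norm_nonneg _) zero_le_one
      _ = r := one_mul r
  have hsq : r ^ 2 ≤ r := by nlinarith
  have : eval y p - eval x p
      = (eval y p - eval x p - ∑ j, eval x (pderiv j p) * (y j - x j))
        + ∑ j, eval x (pderiv j p) * (y j - x j) := by ring
  rw [this]
  exact le_trans (hna _ _) (max_le (ht.trans hsq) hL)

theorem norm_det_le_one {A : Matrix (Fin n) (Fin n) K} (hA : ∀ i j, ‖A i j‖ ≤ 1) :
    ‖A.det‖ ≤ 1 := by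
  rw [Matrix.det_apply]
  refine nsum hna _ _ zero_le_one fun σ _ => ?_
  have hprod : ‖∏ i, A (σ i) i‖ ≤ 1 := by
    rw [norm_prod]
    exact Finset.prod_le_one (fun i _ => norm_nonneg _) fun i _ => hA _ _
  rcases Int.units_eq_one_or (Equiv.Perm.sign σ) with hs | hs <;> rw [hs] <;>
    simpa using hprod

theorem norm_adjugate_le_one {A : Matrix (Fin n) (Fin n) K} (hA : ∀ i j, ‖A i j‖ ≤ 1)
    (i j : Fin n) : ‖A.adjugate i j‖ ≤ 1 := by
  rw [Matrix.adjugate_apply]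
  refine norm_det_le_one hna fun i' j' => ?_
  rw [Matrix.updateRow_apply]
  split
  · rcases eq_or_ne j' i with rfl | hne
    · simp
    · simp [Pi.single_eq_of_ne hne]
  · exact hA _ _


end withNA
end HenselMV

open HenselMV Filter Finset in
/-- Multivariate Hensel's Lemma: for a complete non-archimedean field `K` with ring of
integers `R = {x : ‖x‖ ≤ 1}`, polynomials `f₁,…,fₙ` over `R` and `a ∈ Rⁿ` with
`‖fₗ(a)‖ < ‖det Jf(a)‖²` for all `l`, there is a unique `b ∈ Rⁿ` with `fₗ(b) = 0`
and `‖bₗ - aₗ‖ < ‖det Jf(a)‖` for all `l`. -/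
theorem stmt2 (K : Type) [NormedField K] [CompleteSpace K]
    (hna : ∀ x y : K, ‖x + y‖ ≤ max ‖x‖ ‖y‖)
    (n : ℕ) (f : Fin n → MvPolynomial (Fin n) K)
    (hf : ∀ l d, ‖coeff d (f l)‖ ≤ 1)
    (a : Fin n → K) (ha : ∀ i, ‖a i‖ ≤ 1)
    (h : ∀ l, ‖eval a (f l)‖ <
      ‖eval a (Matrix.det (Matrix.of fun i j => pderiv j (f i)))‖ ^ 2) :
    ∃! b : Fin n → K, (∀ i, ‖b i‖ ≤ 1) ∧ (∀ l, eval b (f l) = 0) ∧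
      ∀ l, ‖b l - a l‖ < ‖eval a (Matrix.det (Matrix.of fun i j => pderiv j (f i)))‖ := by
  classical
  rcases Nat.eq_zero_or_pos n with hn | hn
  · subst hn
    exact ⟨a, ⟨ha, fun l => l.elim0, fun l => l.elim0⟩, fun y _ => funext fun i => i.elim0⟩
  haveI : Nonempty (Fin n) := ⟨⟨0, hn⟩⟩
  set P : MvPolynomial (Fin n) K := Matrix.det (Matrix.of fun i j => pderiv j (f i)) with hPdef
  set δ : ℝ := ‖eval a P‖ with hδdef
  have hfI : ∀ l, Int1 (f l) := hf
  have hPI : Int1 P := Int1.det hna _ fun i j => (hfI i).pderiv hna j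
  have hδ1 : δ ≤ 1 := norm_eval_le_one hna hPI ha
  have hδpos : 0 < δ := by
    have h0 := h ⟨0, hn⟩
    have h1 := norm_nonneg (eval a (f ⟨0, hn⟩))
    have h2 : (0:ℝ) ≤ δ := norm_nonneg _
    nlinarith
  set ε₀ : ℝ := univ.sup' univ_nonempty (fun l => ‖eval a (f l)‖) with hε₀def
  have hε₀ : ∀ l, ‖eval a (f l)‖ ≤ ε₀ := by
    intro l; rw [hε₀def]; exact Finset.le_sup' (fun l => ‖eval a (f l)‖) (mem_univ l)
  have hε₀lt : ε₀ < δ ^ 2 := by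
    rw [hε₀def]; exact (Finset.sup'_lt_iff univ_nonempty).mpr fun l _ => h l
  have hε₀0 : (0:ℝ) ≤ ε₀ := (norm_nonneg _).trans (hε₀ ⟨0, hn⟩)
  set t : ℝ := ε₀ / δ ^ 2 with htdef
  have ht0 : (0:ℝ) ≤ t := div_nonneg hε₀0 (by positivity)
  have ht1 : t < 1 := (div_lt_one (by positivity)).mpr hε₀lt
  have hratio : ε₀ / δ < δ := by rw [div_lt_iff₀ hδpos]; nlinarith
  have hratio0 : (0:ℝ) ≤ ε₀ / δ := div_nonneg hε₀0 hδpos.le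
  have hratio1 : ε₀ / δ ≤ 1 := hratio.le.trans hδ1
  set M : (Fin n → K) → Matrix (Fin n) (Fin n) K :=
    fun x => Matrix.of fun i j => eval x (pderiv j (f i)) with hMdef
  have hMdet : ∀ x : Fin n → K, eval x P = (M x).det := by
    intro x
    rw [hPdef, RingHom.map_det]
    congr 1
  have hMle : ∀ x : Fin n → K, (∀ i, ‖x i‖ ≤ 1) → ∀ i j, ‖M x i j‖ ≤ 1 :=
    fun x hx i j => norm_eval_le_one hna ((hfI i).pderiv hna j) hx
  have hdet : ∀ x : Fin n → K, (∀ i, ‖x i - a i‖ < δ) → ‖(M x).det‖ = δ := by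
    intro x hxa
    set r : ℝ := univ.sup' univ_nonempty (fun i => ‖x i - a i‖) with hrdef
    have hr : ∀ i, ‖x i - a i‖ ≤ r := by
      intro i; rw [hrdef]; exact Finset.le_sup' (fun i => ‖x i - a i‖) (mem_univ i)
    have hrlt : r < δ := by
      rw [hrdef]; exact (Finset.sup'_lt_iff univ_nonempty).mpr fun i _ => hxa i
    have hr0 : (0:ℝ) ≤ r := (norm_nonneg _).trans (hr ⟨0, hn⟩)
    have hr1 : r ≤ 1 := hrlt.le.trans hδ1
    rw [← hMdet]
    exact na_norm_eq hna (lt_of_le_of_lt (eval_sub_eval hna hPI ha hr0 hr1 hr) hrlt)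
  -- the Newton step
  set step : (Fin n → K) → (Fin n → K) := fun x i =>
    x i - ((M x).det)⁻¹ * ∑ j, (M x).adjugate i j * eval x (f j) with hstepdef
  have stepkey : ∀ (x : Fin n → K) (ε : ℝ), 0 ≤ ε → ε ≤ ε₀ →
      (∀ i, ‖x i‖ ≤ 1) → (∀ i, ‖x i - a i‖ ≤ ε₀ / δ) → (∀ l, ‖eval x (f l)‖ ≤ ε) →
      (∀ i, ‖step x i - x i‖ ≤ ε / δ) ∧ (∀ i, ‖step x i‖ ≤ 1) ∧
      (∀ i, ‖step x i - a i‖ ≤ ε₀ / δ) ∧ (∀ l, ‖eval (step x) (f l)‖ ≤ ε ^ 2 / δ ^ 2) := by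
    intro x ε hε0 hεε₀ hx1 hxa hfx
    have hεδ : ε / δ ≤ ε₀ / δ := by gcongr
    have hεδ1 : ε / δ ≤ 1 := hεδ.trans hratio1
    have hεδ0 : (0:ℝ) ≤ ε / δ := div_nonneg hε0 hδpos.le
    have hdetx : ‖(M x).det‖ = δ := hdet x fun i => lt_of_le_of_lt (hxa i) hratio
    have hDne : (M x).det ≠ 0 := by
      intro h0
      rw [h0, norm_zero] at hdetx
      exact absurd hdetx.symm (ne_of_gt hδpos)
    have hstepx : ∀ i, step x i - x i
        = -(((M x).det)⁻¹ * ∑ j, (M x).adjugate i j * eval x (f j)) := by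
      intro i; rw [hstepdef]; ring
    have hvb : ∀ i, ‖∑ j, (M x).adjugate i j * eval x (f j)‖ ≤ ε := by
      intro i
      refine nsum hna _ _ hε0 fun j _ => ?_
      rw [norm_mul]
      calc ‖(M x).adjugate i j‖ * ‖eval x (f j)‖ ≤ 1 * ε :=
            mul_le_mul (norm_adjugate_le_one hna (hMle x hx1) i j) (hfx j) (norm_nonneg _)
              zero_le_one
        _ = ε := one_mul ε
    have hsb : ∀ i, ‖step x i - x i‖ ≤ ε / δ := by
      intro i
      rw [hstepx i, norm_neg, norm_mul, norm_inv, hdetx]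
      calc δ⁻¹ * ‖∑ j, (M x).adjugate i j * eval x (f j)‖ ≤ δ⁻¹ * ε := by
            gcongr; exact hvb i
        _ = ε / δ := by rw [inv_mul_eq_div]
    have hMh : Matrix.mulVec (M x) (fun j => step x j - x j) = fun l => -(eval x (f l)) := by
      have hrw : (fun j => step x j - x j)
          = (-((M x).det)⁻¹) • (Matrix.mulVec (M x).adjugate (fun l => eval x (f l))) := by
        funext j
        rw [hstepx j]
        simp only [Pi.smul_apply, smul_eq_mul, Matrix.mulVec, dotProduct]
        ring
      rw [hrw, Matrix.mulVec_smul, Matrix.mulVec_mulVec, Matrix.mul_adjugate,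
        Matrix.smul_mulVec, Matrix.one_mulVec]
      funext l
      simp only [Pi.smul_apply, smul_eq_mul, smul_smul]
      field_simp
    have hres : ∀ l, ‖eval (step x) (f l)‖ ≤ (ε / δ) ^ 2 := by
      intro l
      have htay := taylor_estimate hna (hfI l) (x := x) (h := fun i => step x i - x i)
        hx1 hεδ0 hεδ1 hsb
      have hxh : (fun i => x i + (step x i - x i)) = step x := funext fun i => by ring
      have hlin : ∑ j, eval x (pderiv j (f l)) * (step x j - x j) = -(eval x (f l)) := by
        have := congrFun hMh l
        rw [← this]
        simp only [Matrix.mulVec, dotProduct, hMdef, Matrix.of_apply]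
      rw [hxh, hlin] at htay
      simpa using htay
    refine ⟨hsb, ?_, ?_, ?_⟩
    · intro i
      have hsplit : step x i = x i + (step x i - x i) := by ring
      rw [hsplit]
      exact le_trans (hna _ _) (max_le (hx1 i) ((hsb i).trans hεδ1))
    · intro i
      have hsplit : step x i - a i = (x i - a i) + (step x i - x i) := by ring
      rw [hsplit]
      exact le_trans (hna _ _) (max_le (hxa i) ((hsb i).trans hεδ))
    · intro l
      calc ‖eval (step x) (f l)‖ ≤ (ε / δ) ^ 2 := hres l
        _ = ε ^ 2 / δ ^ 2 := div_pow ε δ 2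
  -- the Newton sequence
  set u : ℕ → (Fin n → K) := fun k => step^[k] a with hudef
  have hu0 : u 0 = a := rfl
  have husucc : ∀ k, u (k + 1) = step (u k) := fun k => Function.iterate_succ_apply' step k a
  have hinv : ∀ k, (∀ i, ‖u k i‖ ≤ 1) ∧ (∀ i, ‖u k i - a i‖ ≤ ε₀ / δ) ∧
      (∀ l, ‖eval (u k) (f l)‖ ≤ ε₀ * t ^ k) := by
    intro k
    induction k with
    | zero =>
        refine ⟨ha, fun i => by simpa [hu0] using hratio0, fun l => by simpa [hu0] using hε₀ l⟩
    | succ k ih =>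
        have htk1 : t ^ k ≤ 1 := pow_le_one₀ ht0 ht1.le
        have hεk0 : (0:ℝ) ≤ ε₀ * t ^ k := by positivity
        have hεkε₀ : ε₀ * t ^ k ≤ ε₀ := by nlinarith
        have hs := stepkey (u k) (ε₀ * t ^ k) hεk0 hεkε₀ ih.1 ih.2.1 ih.2.2
        rw [husucc] at *
        refine ⟨hs.2.1, hs.2.2.1, fun l => ?_⟩
        calc ‖eval (step (u k)) (f l)‖ ≤ (ε₀ * t ^ k) ^ 2 / δ ^ 2 := hs.2.2.2 l
          _ = (ε₀ * t ^ k) * (t ^ k * (ε₀ / δ ^ 2)) := by field_simp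
          _ = ε₀ * t ^ (k + 1) * t ^ k := by rw [htdef]; ring
          _ ≤ ε₀ * t ^ (k + 1) * 1 := by
              have : (0:ℝ) ≤ ε₀ * t ^ (k + 1) := by positivity
              nlinarith
          _ = ε₀ * t ^ (k + 1) := mul_one _
  have hdiff : ∀ k i, ‖u (k + 1) i - u k i‖ ≤ (ε₀ / δ) * t ^ k := by
    intro k i
    have htk1 : t ^ k ≤ 1 := pow_le_one₀ ht0 ht1.le
    have hεk0 : (0:ℝ) ≤ ε₀ * t ^ k := by positivity
    have hεkε₀ : ε₀ * t ^ k ≤ ε₀ := by nlinarith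
    have hs := stepkey (u k) (ε₀ * t ^ k) hεk0 hεkε₀ (hinv k).1 (hinv k).2.1 (hinv k).2.2
    rw [husucc]
    calc ‖step (u k) i - u k i‖ ≤ (ε₀ * t ^ k) / δ := hs.1 i
      _ = (ε₀ / δ) * t ^ k := by ring
  -- convergence
  have hcauchy : ∀ i, ∃ bi : K, Tendsto (fun k => u k i) atTop (nhds bi) := by
    intro i
    refine cauchySeq_tendsto_of_complete (cauchySeq_of_le_geometric t (ε₀ / δ) ht1 fun k => ?_)
    rw [dist_eq_norm, norm_sub_rev]
    exact hdiff k i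
  choose b hb using hcauchy
  have hbtend : Tendsto u atTop (nhds b) := tendsto_pi_nhds.mpr hb
  have hbR : ∀ i, ‖b i‖ ≤ 1 := fun i =>
    le_of_tendsto (hb i).norm (Eventually.of_forall fun k => (hinv k).1 i)
  have hba : ∀ i, ‖b i - a i‖ ≤ ε₀ / δ := fun i =>
    le_of_tendsto ((hb i).sub tendsto_const_nhds).norm
      (Eventually.of_forall fun k => (hinv k).2.1 i)
  have hbf : ∀ l, eval b (f l) = 0 := by
    intro l
    have h1 : Tendsto (fun k => eval (u k) (f l)) atTop (nhds (eval b (f l))) :=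
      ((MvPolynomial.continuous_eval (f l)).tendsto b).comp hbtend
    have h2 : Tendsto (fun k => eval (u k) (f l)) atTop (nhds 0) := by
      apply squeeze_zero_norm (fun k => (hinv k).2.2 l)
      have := (tendsto_pow_atTop_nhds_zero_of_lt_one ht0 ht1).const_mul ε₀
      simpa using this
    exact tendsto_nhds_unique h1 h2
  -- uniqueness
  have huniq : ∀ y z : Fin n → K, (∀ i, ‖y i‖ ≤ 1) → (∀ l, eval y (f l) = 0) →
      (∀ i, ‖y i - a i‖ < δ) → (∀ i, ‖z i‖ ≤ 1) → (∀ l, eval z (f l) = 0) →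
      (∀ i, ‖z i - a i‖ < δ) → y = z := by
    intro y z hy1 hyf hya hz1 hzf hza
    set ρ : ℝ := univ.sup' univ_nonempty (fun i => ‖z i - y i‖) with hρdef
    have hρge : ∀ i, ‖z i - y i‖ ≤ ρ := by
      intro i; rw [hρdef]; exact Finset.le_sup' (fun i => ‖z i - y i‖) (mem_univ i)
    have hρ0 : (0:ℝ) ≤ ρ := (norm_nonneg _).trans (hρge ⟨0, hn⟩)
    have hρδ : ρ < δ := by
      rw [hρdef]
      refine (Finset.sup'_lt_iff univ_nonempty).mpr fun i _ => ?_
      have hsplit : z i - y i = (z i - a i) + -(y i - a i) := by ring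
      rw [hsplit]
      have h2 : ‖-(y i - a i)‖ < δ := by rw [norm_neg]; exact hya i
      exact lt_of_le_of_lt (hna _ _) (max_lt (hza i) h2)
    have hρ1 : ρ ≤ 1 := hρδ.le.trans hδ1
    have hdety : ‖(M y).det‖ = δ := hdet y hya
    have htay : ∀ l, ‖∑ j, eval y (pderiv j (f l)) * (z j - y j)‖ ≤ ρ ^ 2 := by
      intro l
      have := taylor_estimate hna (hfI l) (x := y) (h := fun j => z j - y j) hy1 hρ0 hρ1 hρge
      have hyz : (fun i => y i + (z i - y i)) = z := funext fun i => by ring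
      rw [hyz, hzf l, hyf l] at this
      simpa using this
    have hDh : ((M y).det) • (fun j => z j - y j)
        = Matrix.mulVec (M y).adjugate (Matrix.mulVec (M y) (fun j => z j - y j)) := by
      rw [Matrix.mulVec_mulVec, Matrix.adjugate_mul, Matrix.smul_mulVec,
        Matrix.one_mulVec]
    have hcomp : ∀ i, δ * ‖z i - y i‖ ≤ ρ ^ 2 := by
      intro i
      have hieq := congrFun hDh i
      rw [← hdety, ← norm_mul]
      have : (M y).det * (z i - y i) = (Matrix.mulVec (M y).adjugate (Matrix.mulVec (M y) (fun j => z j - y j))) i := by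
        rw [← hieq]; simp [smul_eq_mul]
      rw [this]
      simp only [Matrix.mulVec, dotProduct]
      refine nsum hna _ _ (by positivity) fun j _ => ?_
      rw [norm_mul]
      have hw : ‖∑ m, (M y) j m * (z m - y m)‖ ≤ ρ ^ 2 := by
        have : ∑ m, (M y) j m * (z m - y m) = ∑ m, eval y (pderiv m (f j)) * (z m - y m) := by
          simp [hMdef]
        rw [this]
        exact htay j
      calc ‖(M y).adjugate i j‖ * ‖∑ m, (M y) j m * (z m - y m)‖ ≤ 1 * ρ ^ 2 :=
            mul_le_mul (norm_adjugate_le_one hna (hMle y hy1) i j) hw (norm_nonneg _)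
              zero_le_one
        _ = ρ ^ 2 := one_mul _
    have hρeq0 : ρ = 0 := by
      by_contra hne
      have hpos : 0 < ρ := lt_of_le_of_ne hρ0 (Ne.symm hne)
      have hδρ : δ * ρ ≤ ρ ^ 2 := by
        have : ρ ≤ ρ ^ 2 / δ := by
          rw [hρdef]
          refine Finset.sup'_le _ _ fun i _ => ?_
          rw [le_div_iff₀ hδpos, mul_comm]
          exact hcomp i
        calc δ * ρ ≤ δ * (ρ ^ 2 / δ) := by gcongr
          _ = ρ ^ 2 := by field_simp
      have hlt : ρ * ρ < δ * ρ := mul_lt_mul_of_pos_right hρδ hpos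
      rw [pow_two] at hδρ
      linarith
    funext i
    have h1 : ‖z i - y i‖ ≤ 0 := hρeq0 ▸ hρge i
    have h2 : z i - y i = 0 := by
      have := le_antisymm h1 (norm_nonneg _)
      exact norm_eq_zero.mp this
    exact (sub_eq_zero.mp h2).symm
  refine ⟨b, ⟨hbR, hbf, fun l => lt_of_le_of_lt (hba l) hratio⟩, ?_⟩
  intro y hy
  exact huniq y b hy.1 hy.2.1 hy.2.2 hbR hbf fun i => lt_of_le_of_lt (hba i) hratio
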